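/- Let v(s) = -log(sinh s) + f·s⁴ + o(s⁴) as s → 0⁺, where f is a real constant, with v'(s) = -coth(s) + 4f s³ + o(s³). Then lim_{s→0⁺} (1/20)·[(v'(s)² - 1)² - e^{4v(s)}] = -f. -/

import Mathlib

open Filter Topology Asymptotics

lemma key_alg_qlm (s S C w eq : ℝ) (hs : s ≠ 0) (hS : S ≠ 0) :
    (1/S^2 - 2*C*w/S + w^2)^2 - eq / S^4 =
    -((s/S)^4 * ((eq - 1)/s^4)) - 4*C*(s/S)^3*(w/s^3) + 2*(w/s^3)^2*s^4*(s/S)^2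
      + (s^2*(-(2*C*(s/S)*(w/s^3)) + (w/s^3)^2*s^4))^2 := by
  field_simp
  ring

/-- If `v(s) = -log(sinh s) + f s⁴ + o(s⁴)` as `s → 0⁺` with
`v'(s) = -coth s + 4 f s³ + o(s³)`, then
`(1/20)[(v'² - 1)² - e^{4v}] → -f` as `s → 0⁺`. -/
theorem quasi_local_mass_limit_at_end (v v' : ℝ → ℝ) (f : ℝ)
    (hv : (fun s => v s - (-Real.log (Real.sinh s) + f * s ^ 4))
        =o[𝓝[>] (0:ℝ)] fun s => s ^ 4)
    (hv' : (fun s => v' s - (-(Real.cosh s / Real.sinh s) + 4 * f * s ^ 3))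
        =o[𝓝[>] (0:ℝ)] fun s => s ^ 3) :
    Tendsto (fun s => (1/20) * (((v' s) ^ 2 - 1) ^ 2 - Real.exp (4 * v s)))
      (𝓝[>] (0:ℝ)) (𝓝 (-f)) := by
  set w : ℝ → ℝ := fun s => v' s + Real.cosh s / Real.sinh s with hw_def
  set q : ℝ → ℝ := fun s => 4 * v s + 4 * Real.log (Real.sinh s) with hq_def
  set W : ℝ → ℝ := fun s => w s / s ^ 3 with hW_def
  set Q : ℝ → ℝ := fun s => q s / s ^ 4 with hQ_def
  set R : ℝ → ℝ := fun s => (Real.exp (q s) - 1 - q s) / s ^ 4 with hR_def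
  set r : ℝ → ℝ := fun s => s / Real.sinh s with hr_def
  have hev : ∀ᶠ s in 𝓝[>] (0:ℝ), 0 < s := self_mem_nhdsWithin
  -- s → 0
  have hs0 : Tendsto (fun s : ℝ => s) (𝓝[>] (0:ℝ)) (𝓝 0) :=
    tendsto_id.mono_left nhdsWithin_le_nhds
  -- cosh → 1
  have hC : Tendsto (fun s : ℝ => Real.cosh s) (𝓝[>] (0:ℝ)) (𝓝 1) := by
    have := (Real.continuous_cosh.tendsto 0).mono_left (nhdsWithin_le_nhds (s := Set.Ioi (0:ℝ)))
    simpa using this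
  -- sinh s / s → 1
  have hsinh : Tendsto (fun s : ℝ => Real.sinh s / s) (𝓝[>] (0:ℝ)) (𝓝 1) := by
    have h := hasDerivAt_iff_tendsto_slope.mp (Real.hasDerivAt_sinh 0)
    have h2 : Tendsto (slope Real.sinh 0) (𝓝[>] (0:ℝ)) (𝓝 (Real.cosh 0)) :=
      h.mono_left (nhdsWithin_mono _ (fun x hx => ne_of_gt hx))
    rw [Real.cosh_zero] at h2
    refine h2.congr (fun s => ?_)
    simp [slope_def_field]
  -- r → 1
  have hr : Tendsto r (𝓝[>] (0:ℝ)) (𝓝 1) := by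
    have := hsinh.inv₀ one_ne_zero
    rw [inv_one] at this
    refine this.congr (fun s => ?_)
    simp [hr_def, inv_div]
  -- W → 4f
  have hW : Tendsto W (𝓝[>] (0:ℝ)) (𝓝 (4 * f)) := by
    have h := hv'.tendsto_div_nhds_zero
    have h2 := h.add_const (4 * f)
    rw [zero_add] at h2
    refine h2.congr' ?_
    filter_upwards [hev] with s hs
    have h3 : s ^ 3 ≠ 0 := pow_ne_zero _ (ne_of_gt hs)
    simp only [hW_def, hw_def]
    field_simp
    ring
  -- Q → 4f
  have hQ : Tendsto Q (𝓝[>] (0:ℝ)) (𝓝 (4 * f)) := by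
    have h := (hv.tendsto_div_nhds_zero).const_mul (4:ℝ)
    have h2 := h.add_const (4 * f)
    rw [mul_zero, zero_add] at h2
    refine h2.congr' ?_
    filter_upwards [hev] with s hs
    have h3 : s ^ 4 ≠ 0 := pow_ne_zero _ (ne_of_gt hs)
    simp only [hQ_def, hq_def]
    field_simp
    ring
  -- q → 0
  have hq0 : Tendsto q (𝓝[>] (0:ℝ)) (𝓝 0) := by
    have h := hQ.mul (hs0.pow 4)
    rw [mul_comm] at h
    have h2 : (0:ℝ) ^ 4 * (4 * f) = 0 := by norm_num
    rw [h2] at h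
    refine h.congr' ?_
    filter_upwards [hev] with s hs
    have h3 : s ^ 4 ≠ 0 := pow_ne_zero _ (ne_of_gt hs)
    simp only [hQ_def]
    field_simp
  -- R → 0
  have hR : Tendsto R (𝓝[>] (0:ℝ)) (𝓝 0) := by
    have hq1 : ∀ᶠ s in 𝓝[>] (0:ℝ), |q s| ≤ 1 := by
      have h1 : ∀ᶠ x : ℝ in 𝓝 0, |x| ≤ 1 := by
        filter_upwards [Metric.ball_mem_nhds (0:ℝ) one_pos] with x hx
        rw [Metric.mem_ball, Real.dist_eq, sub_zero] at hx
        linarith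
      exact hq0.eventually h1
    have hbound : Tendsto (fun s => Q s ^ 2 * s ^ 4) (𝓝[>] (0:ℝ)) (𝓝 0) := by
      have := (hQ.pow 2).mul (hs0.pow 4)
      simpa using this
    refine squeeze_zero_norm' ?_ hbound
    filter_upwards [hev, hq1] with s hs hq1s
    have h4 : (0:ℝ) < s ^ 4 := pow_pos hs 4
    have h5 := Real.abs_exp_sub_one_sub_id_le hq1s
    simp only [hR_def, hQ_def, Real.norm_eq_abs, abs_div, abs_of_pos h4]
    rw [div_le_iff₀ h4]
    calc |Real.exp (q s) - 1 - q s| ≤ q s ^ 2 := h5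
      _ = (q s / s ^ 4) ^ 2 * s ^ 4 * s ^ 4 := by field_simp
  -- main limit of the decomposed expression
  set G : ℝ → ℝ := fun s =>
    -((r s) ^ 4 * (Q s + R s)) - 4 * Real.cosh s * (r s) ^ 3 * W s
      + 2 * (W s) ^ 2 * s ^ 4 * (r s) ^ 2
      + (s ^ 2 * (-(2 * Real.cosh s * r s * W s) + (W s) ^ 2 * s ^ 4)) ^ 2 with hG_def
  have hG : Tendsto G (𝓝[>] (0:ℝ)) (𝓝 (-(20 * f))) := by
    have h : Tendsto G (𝓝[>] (0:ℝ)) (𝓝 (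
        -((1:ℝ) ^ 4 * (4 * f + 0)) - 4 * 1 * 1 ^ 3 * (4 * f)
          + 2 * (4 * f) ^ 2 * 0 ^ 4 * 1 ^ 2
          + ((0:ℝ) ^ 2 * (-(2 * 1 * 1 * (4 * f)) + (4 * f) ^ 2 * 0 ^ 4)) ^ 2)) := by
      refine ((((hr.pow 4).mul (hQ.add hR)).neg.sub
        (((((tendsto_const_nhds (x := (4:ℝ)))).mul hC).mul (hr.pow 3)).mul hW)).add
        ((((tendsto_const_nhds (x := (2:ℝ))).mul (hW.pow 2)).mul (hs0.pow 4)).mul (hr.pow 2))).add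
        (((hs0.pow 2).mul (((((tendsto_const_nhds (x := (2:ℝ))).mul hC).mul hr).mul hW).neg.add
          ((hW.pow 2).mul (hs0.pow 4)))).pow 2)
    convert h using 2
    ring
  have hfinal := hG.const_mul (1/20 : ℝ)
  have hval : (1/20 : ℝ) * (-(20 * f)) = -f := by ring
  rw [hval] at hfinal
  refine hfinal.congr' ?_
  filter_upwards [hev] with s hs
  have hS : 0 < Real.sinh s := Real.sinh_pos_iff.mpr hs
  have hSne : Real.sinh s ≠ 0 := ne_of_gt hS
  have hsne : s ≠ 0 := ne_of_gt hs
  have hcs := Real.cosh_sq_sub_sinh_sq s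
  -- exp (4 v s) = exp (q s) / sinh s ^ 4
  have h4log : Real.exp (4 * Real.log (Real.sinh s)) = Real.sinh s ^ 4 := by
    rw [show (4:ℝ) * Real.log (Real.sinh s) = Real.log (Real.sinh s) + Real.log (Real.sinh s)
      + Real.log (Real.sinh s) + Real.log (Real.sinh s) by ring, Real.exp_add, Real.exp_add,
      Real.exp_add, Real.exp_log hS]
    ring
  have hexp : Real.exp (4 * v s) = Real.exp (q s) / Real.sinh s ^ 4 := by
    rw [eq_div_iff (pow_ne_zero _ hSne), ← h4log, ← Real.exp_add]
  -- (v')² - 1 in terms of w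
  have hv'w : v' s = w s - Real.cosh s / Real.sinh s := by
    simp only [hw_def]; ring
  have hCS : (Real.cosh s / Real.sinh s) ^ 2 = 1 / Real.sinh s ^ 2 + 1 := by
    rw [div_pow]
    rw [show Real.cosh s ^ 2 = 1 + Real.sinh s ^ 2 from by linarith]
    field_simp
  have h1 : (v' s) ^ 2 - 1 = 1 / Real.sinh s ^ 2 - 2 * Real.cosh s * w s / Real.sinh s
      + (w s) ^ 2 := by
    rw [hv'w]
    have : (w s - Real.cosh s / Real.sinh s) ^ 2 - 1
        = (w s) ^ 2 - 2 * (Real.cosh s / Real.sinh s) * w s + (Real.cosh s / Real.sinh s) ^ 2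
          - 1 := by ring
    rw [this, hCS]
    field_simp
    ring
  have hQR : Q s + R s = (Real.exp (q s) - 1) / s ^ 4 := by
    simp only [hQ_def, hR_def]
    rw [← add_div]
    congr 1
    ring
  rw [h1, hexp]
  simp only [hG_def, hQR, hW_def, hr_def]
  rw [key_alg_qlm s (Real.sinh s) (Real.cosh s) (w s) (Real.exp (q s)) hsne hSne]
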